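/- arXiv:2204.03674 — 2 statements merged into one kernel-verified Lean document; each statement's English description precedes it below -/
import Mathlib

section
/- Let N be a positive integer, d a divisor of N, and χ a Dirichlet character modulo N. Then the sum of χ(a) over all a in (Z/NZ)* with a ≡ 1 (mod d) equals φ(N)/φ(d) if the conductor of χ divides d, and equals 0 otherwise. -/
open Finset

open DirichletCharacter
-- key lemma: factorsThrough d → conductor ∣ d
theorem aux_conductor_dvd {N d : ℕ} [NeZero N] (hd : d ∣ N)
    (χ : DirichletCharacter ℂ N) (h : χ.FactorsThrough d) : χ.conductor ∣ d := by
  set c := χ.conductor with hc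
  have hcN : c ∣ N := χ.conductor_dvd_level
  set g := Nat.gcd c d with hg
  have hgN : g ∣ N := (Nat.gcd_dvd_left c d).trans hcN
  -- show χ factors through g
  have hker_c : (ZMod.unitsMap hcN).ker ≤ χ.toUnitHom.ker :=
    (factorsThrough_iff_ker_unitsMap hcN).mp χ.factorsThrough_conductor
  have hker_d : (ZMod.unitsMap hd).ker ≤ χ.toUnitHom.ker :=
    (factorsThrough_iff_ker_unitsMap hd).mp h
  have hcne : c ≠ 0 := χ.conductor_ne_zero
  have hdne : d ≠ 0 := fun h0 => NeZero.ne N (Nat.eq_zero_of_zero_dvd (h0 ▸ hd))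
  set m := Nat.lcm c d with hm
  have hmN : m ∣ N := Nat.lcm_dvd hcN hd
  have hFg : χ.FactorsThrough g := by
    rw [factorsThrough_iff_ker_unitsMap hgN]
    intro u hu
    have hu' : ZMod.cast (u : ZMod N) = (1 : ZMod g) := by
      have := congrArg (Units.val) hu
      simpa [ZMod.unitsMap_def] using this
    set a := (u : ZMod N).val with ha
    have hau : ((a : ℕ) : ZMod N) = (u : ZMod N) := by
      simp [ha, ZMod.natCast_val, ZMod.cast_id]
    have haN : Nat.Coprime a N := ZMod.val_coe_unit_coprime u
    have hag : a ≡ 1 [MOD g] := by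
      rw [← ZMod.natCast_eq_natCast_iff]
      rw [show ((1:ℕ) : ZMod g) = 1 by simp]
      rw [← hu', ← ZMod.natCast_val (u : ZMod N)]
    obtain ⟨k, hk1, hka⟩ := Nat.chineseRemainder' (n := c) (m := d) hag.symm
    -- k coprime to lcm c d
    have hkc : Nat.Coprime k c := by
      have h2 : ((k : ℕ) : ZMod c) = 1 := by
        rw [← Nat.cast_one, ZMod.natCast_eq_natCast_iff]; exact hk1
      haveI : NeZero c := ⟨hcne⟩
      exact (ZMod.isUnit_iff_coprime k c).mp (h2 ▸ isUnit_one)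
    have hkd : Nat.Coprime k d := by
      have h1 : ((k : ℕ) : ZMod d) = ((a : ℕ) : ZMod d) :=
        (ZMod.natCast_eq_natCast_iff _ _ _).mpr hka
      haveI : NeZero d := ⟨hdne⟩
      have : IsUnit ((k : ℕ) : ZMod d) := by
        rw [h1]
        exact (ZMod.isUnit_iff_coprime a d).mpr (haN.coprime_dvd_right hd)
      exact (ZMod.isUnit_iff_coprime k d).mp this
    have hkm : Nat.Coprime k m := (hkc.mul_right hkd).coprime_dvd_right (Nat.lcm_dvd_mul c d)
    set w' : (ZMod m)ˣ := ZMod.unitOfCoprime k hkm with hw'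
    obtain ⟨w, hw⟩ := ZMod.unitsMap_surjective hmN w'
    have hwm : ZMod.cast (w : ZMod N) = ((k : ℕ) : ZMod m) := by
      have := congrArg (Units.val) hw
      simpa [ZMod.unitsMap_def, hw', ZMod.coe_unitOfCoprime] using this
    -- w is in ker to level c
    have hwc : w ∈ (ZMod.unitsMap hcN).ker := by
      have hcm : c ∣ m := Nat.dvd_lcm_left c d
      ext
      show ((ZMod.unitsMap hcN w : ZMod c)) = 1
      have hcomp : (ZMod.castHom hcN (ZMod c)) = (ZMod.castHom hcm (ZMod c)).comp
          (ZMod.castHom hmN (ZMod m)) := (ZMod.castHom_comp hcm hmN).symm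
      rw [ZMod.unitsMap_def]
      show (ZMod.castHom hcN (ZMod c)) (w : ZMod N) = 1
      rw [hcomp, RingHom.comp_apply,
        show (ZMod.castHom hmN (ZMod m)) (w : ZMod N) = ((k : ℕ) : ZMod m) from
          (ZMod.castHom_apply _).trans hwm, map_natCast,
        ← Nat.cast_one, ZMod.natCast_eq_natCast_iff]
      exact hk1
    -- u * w⁻¹ is in ker to level d
    have hvd : u * w⁻¹ ∈ (ZMod.unitsMap hd).ker := by
      have hdm : d ∣ m := Nat.dvd_lcm_right c d
      have hwd : ZMod.unitsMap hd w = ZMod.unitsMap hd u := by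
        ext
        show ((ZMod.unitsMap hd w : ZMod d)) = ((ZMod.unitsMap hd u : ZMod d))
        rw [ZMod.unitsMap_def]
        show (ZMod.castHom hd (ZMod d)) (w : ZMod N) = (ZMod.castHom hd (ZMod d)) (u : ZMod N)
        have hcomp : (ZMod.castHom hd (ZMod d)) = (ZMod.castHom hdm (ZMod d)).comp
            (ZMod.castHom hmN (ZMod m)) := (ZMod.castHom_comp hdm hmN).symm
        rw [hcomp, RingHom.comp_apply,
          show (ZMod.castHom hmN (ZMod m)) (w : ZMod N) = ((k : ℕ) : ZMod m) from
            (ZMod.castHom_apply _).trans hwm, map_natCast,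
          (ZMod.natCast_eq_natCast_iff _ _ _).mpr hka, ← hau, map_natCast]
      rw [MonoidHom.mem_ker, map_mul, map_inv, hwd]
      simp
    have := mul_mem (hker_d hvd) (hker_c hwc)
    rwa [MonoidHom.mem_ker, map_mul, map_mul, map_inv, inv_mul_cancel_right] at this
  have hle : χ.conductor ≤ g := Nat.sInf_le hFg
  have hgc : g ∣ c := Nat.gcd_dvd_left c d
  have hgle : g ≤ c := Nat.le_of_dvd (Nat.pos_of_ne_zero hcne) hgc
  have hceq : c = g := le_antisymm hle hgle
  exact hceq ▸ Nat.gcd_dvd_right c d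

/-- For a Dirichlet character `χ` mod `N` and a divisor `d` of `N`, the sum of `χ(a)`
over units `a` of `ZMod N` with `a ≡ 1 (mod d)` equals `φ(N)/φ(d)` if the conductor
of `χ` divides `d`, and equals `0` otherwise. -/
theorem sum_char_on_units_congruent_one {N d : ℕ} [NeZero N] (hd : d ∣ N)
    (χ : DirichletCharacter ℂ N) :
    ∑ a ∈ Finset.univ.filter (fun a : (ZMod N)ˣ => ZMod.unitsMap hd a = 1), χ a =
      if χ.conductor ∣ d then ((N.totient / d.totient : ℕ) : ℂ) else 0 := by
  classical
  haveI : NeZero d := ⟨fun h0 => NeZero.ne N (Nat.eq_zero_of_zero_dvd (h0 ▸ hd))⟩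
  set K := (ZMod.unitsMap hd).ker with hK
  let f : K →* ℂ := ((Units.coeHom ℂ).comp χ.toUnitHom).comp K.subtype
  have hf : ∀ x : K, f x = χ ((x : (ZMod N)ˣ) : ZMod N) := fun x =>
    MulChar.coe_toUnitHom χ _
  have hsum : ∑ a ∈ Finset.univ.filter (fun a : (ZMod N)ˣ => ZMod.unitsMap hd a = 1), χ a
      = ∑ x : K, f x := by
    rw [Finset.sum_subtype (Finset.univ.filter _)
      (p := fun a : (ZMod N)ˣ => a ∈ K)
      (fun x => by simp [hK, MonoidHom.mem_ker]) (fun a : (ZMod N)ˣ => χ a)]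
    exact Finset.sum_congr rfl fun x _ => (hf x).symm
  -- cardinality of the kernel
  have hcard : Fintype.card K = N.totient / d.totient := by
    have h1 : Nat.card K * K.index = Nat.card (ZMod N)ˣ := Subgroup.card_mul_index K
    have h2 : K.index = Nat.card (ZMod d)ˣ := by
      rw [hK, Subgroup.index_ker]
      have : (ZMod.unitsMap hd).range = ⊤ :=
        MonoidHom.range_eq_top.mpr (ZMod.unitsMap_surjective hd)
      rw [this]
      exact Nat.card_congr Subgroup.topEquiv.toEquiv
    rw [h2] at h1
    simp only [Nat.card_eq_fintype_card] at h1
    rw [ZMod.card_units_eq_totient, ZMod.card_units_eq_totient] at h1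
    rw [← h1, Nat.mul_div_cancel _ (Nat.totient_pos.mpr (Nat.pos_of_ne_zero (NeZero.ne d)))]
  rw [hsum, sum_hom_units f]
  have hiff : f = 1 ↔ χ.conductor ∣ d := by
    constructor
    · intro h1
      refine aux_conductor_dvd hd χ ?_
      rw [factorsThrough_iff_ker_unitsMap hd]
      intro x hx
      rw [MonoidHom.mem_ker]
      have := congrArg (fun g : K →* ℂ => g ⟨x, hx⟩) h1
      simp only [MonoidHom.one_apply] at this
      exact Units.ext (by simpa [f] using this)
    · intro h1
      have hft : χ.FactorsThrough d := by
        obtain ⟨hcN', χ₀, hχ₀⟩ := χ.factorsThrough_conductor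
        refine ⟨hd, changeLevel h1 χ₀, ?_⟩
        exact hχ₀.trans (changeLevel_trans χ₀ h1 hd)
      have hker := (factorsThrough_iff_ker_unitsMap hd).mp hft
      ext x
      have hx1 : χ.toUnitHom (x : (ZMod N)ˣ) = 1 := hker x.2
      show f x = 1
      rw [hf, ← MulChar.coe_toUnitHom χ, hx1, Units.val_one]
  by_cases h : χ.conductor ∣ d
  · rw [if_pos h, if_pos (hiff.mpr h), hcard]
  · rw [if_neg h, if_neg (fun hf1 => h (hiff.mp hf1)), Nat.cast_zero]
end

section
/- Let f be a Q-valued function on (Z/NZ)* with character decomposition f = Σ_χ c_χ χ over Dirichlet characters χ mod N. If for every prime p dividing N, τ_p denotes a generator of Gal(Q(ζ_N)/Q(ζ_{N/p})), then f is imprimitive mod N (i.e., c_χ = 0 for every character χ of conductor N) if and only if ∏_{p | N} (1 − τ_p) annihilates the group-ring element P(f) = Σ_{(a,N)=1} f(a) σ_a in Q[Gal(Q(ζ_N)/Q)]. -/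
open Finset

section ImprimitiveAux

set_option linter.unusedSectionVars false
variable {N : ℕ} [NeZero N]

/-- Evaluation of the group ring `ℚ[(ZMod N)ˣ]` at a Dirichlet character. -/
noncomputable def imprimEv (χ : DirichletCharacter ℂ N) :
    MonoidAlgebra ℚ (ZMod N)ˣ →ₐ[ℚ] ℂ :=
  MonoidAlgebra.lift ℚ ℂ (ZMod N)ˣ ((Units.coeHom ℂ).comp χ.toUnitHom)

lemma imprimEv_single (χ : DirichletCharacter ℂ N) (a : (ZMod N)ˣ) (c : ℚ) :
    imprimEv χ (MonoidAlgebra.single a c) = (c : ℂ) * χ (a : ZMod N) := by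
  simp [imprimEv, MonoidAlgebra.lift_single, Rat.smul_def]

instance : HasEnoughRootsOfUnity ℂ (Monoid.exponent (ZMod N)ˣ) := by
  have : NeZero ((Monoid.exponent (ZMod N)ˣ : ℕ) : ℂ) :=
    ⟨by exact_mod_cast Monoid.exponent_ne_zero_of_finite⟩
  infer_instance

lemma imprimEv_eq_sum (χ : DirichletCharacter ℂ N) (x : MonoidAlgebra ℚ (ZMod N)ˣ) :
    imprimEv χ x = ∑ a : (ZMod N)ˣ, (x.coeff a : ℂ) * χ (a : ZMod N) := by
  have hx : x = ∑ a : (ZMod N)ˣ, MonoidAlgebra.single a (x.coeff a) := by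
    ext b
    rw [MonoidAlgebra.coeff_sum, Finsupp.finset_sum_apply]
    simp [MonoidAlgebra.coeff_single, Finsupp.single_apply]
  conv_lhs => rw [hx]
  rw [map_sum]
  exact Finset.sum_congr rfl fun a _ => imprimEv_single χ a (x.coeff a)

/-- Dirichlet characters with values in `ℂ` separate elements of `ℚ[(ZMod N)ˣ]`. -/
lemma imprim_eq_zero_of_forall_ev (x : MonoidAlgebra ℚ (ZMod N)ˣ)
    (h : ∀ χ : DirichletCharacter ℂ N, imprimEv χ x = 0) : x = 0 := by
  ext b
  have key : ∑ χ : DirichletCharacter ℂ N, χ ((b : ZMod N)⁻¹) * imprimEv χ x = 0 := by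
    simp [h]
  rw [Finset.sum_congr rfl (fun χ _ => by rw [imprimEv_eq_sum])] at key
  simp_rw [Finset.mul_sum, Finset.sum_comm (s := Finset.univ (α := DirichletCharacter ℂ N))] at key
  have key2 : ∀ a : (ZMod N)ˣ,
      ∑ χ : DirichletCharacter ℂ N, χ ((b : ZMod N)⁻¹) * ((x.coeff a : ℂ) * χ (a : ZMod N))
        = (x.coeff a : ℂ) * (if b = a then (N.totient : ℂ) else 0) := by
    intro a
    have h1 : ∑ χ : DirichletCharacter ℂ N, χ ((b : ZMod N)⁻¹) * ((x.coeff a : ℂ) * χ (a : ZMod N))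
        = (x.coeff a : ℂ) * ∑ χ : DirichletCharacter ℂ N, χ ((b : ZMod N)⁻¹) * χ (a : ZMod N) := by
      rw [Finset.mul_sum]; exact Finset.sum_congr rfl fun χ _ => by ring
    rw [h1, DirichletCharacter.sum_char_inv_mul_char_eq ℂ (b.isUnit) (a : ZMod N)]
    congr 1
    simp [Units.ext_iff]
  rw [Finset.sum_congr rfl (fun a _ => key2 a)] at key
  simp_rw [mul_ite, mul_zero, Finset.sum_ite_eq] at key
  simp only [Finset.mem_univ, if_true] at key
  have ht : (N.totient : ℂ) ≠ 0 := by
    exact_mod_cast (Nat.totient_pos.mpr (Nat.pos_of_ne_zero (NeZero.ne N))).ne'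
  have : (x.coeff b : ℂ) = 0 := by
    rcases mul_eq_zero.mp key with h' | h'
    · exact h'
    · exact absurd h' ht
  simpa using Rat.cast_injective (α := ℂ) (by simpa using this)

/-- If `χ` has conductor `N`, then `χ` is nontrivial on the kernel generator `τ_p`. -/
lemma imprim_chi_tau_ne_one {p : ℕ} (hp : p ∈ N.primeFactors) (τp : (ZMod N)ˣ)
    (hτ : Subgroup.zpowers τp
      = (ZMod.unitsMap (Nat.div_dvd_of_dvd (Nat.dvd_of_mem_primeFactors hp))).ker)
    (χ : DirichletCharacter ℂ N) (hχ : χ.conductor = N) : χ ((τp : ZMod N)) ≠ 1 := by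
  intro h
  have h1 : χ.toUnitHom τp = 1 := by
    ext
    rwa [MulChar.coe_toUnitHom, Units.val_one]
  have hker : (ZMod.unitsMap (Nat.div_dvd_of_dvd (Nat.dvd_of_mem_primeFactors hp))).ker
      ≤ χ.toUnitHom.ker := by
    rw [← hτ]
    intro y hy
    obtain ⟨k, rfl⟩ := Subgroup.mem_zpowers_iff.mp hy
    rw [MonoidHom.mem_ker, map_zpow, h1, one_zpow]
  have hFT : χ.FactorsThrough (N / p) :=
    (DirichletCharacter.factorsThrough_iff_ker_unitsMap _).mpr hker
  have hle : χ.conductor ≤ N / p := Nat.sInf_le hFT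
  have hlt : N / p < N :=
    Nat.div_lt_self (Nat.pos_of_ne_zero (NeZero.ne N))
      (Nat.prime_of_mem_primeFactors hp).one_lt
  omega

/-- If `χ` has conductor different from `N`, it factors through `N / p` for some prime `p ∣ N`. -/
lemma imprim_exists_factor (χ : DirichletCharacter ℂ N) (hχ : χ.conductor ≠ N) :
    ∃ p ∈ N.primeFactors, χ.FactorsThrough (N / p) := by
  set c := χ.conductor with hc
  have hcd : c ∣ N := χ.conductor_dvd_level
  have hc0 : c ≠ 0 := χ.conductor_ne_zero
  have hq : N / c ≠ 1 := by
    intro h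
    exact hχ (Nat.eq_of_dvd_of_div_eq_one hcd h ▸ rfl)
  set p := (N / c).minFac with hpdef
  have hpprime : p.Prime := Nat.minFac_prime hq
  have hpdvd' : p ∣ N / c := Nat.minFac_dvd _
  have hpdvd : p ∣ N := hpdvd'.trans (Nat.div_dvd_of_dvd hcd)
  refine ⟨p, Nat.mem_primeFactors.mpr ⟨hpprime, hpdvd, NeZero.ne N⟩, ?_⟩
  have hcp : c ∣ N / p := by
    rw [Nat.dvd_div_iff_mul_dvd hpdvd]
    obtain ⟨k, hk⟩ := hpdvd'
    have hN' : N = c * (p * k) := Nat.eq_mul_of_div_eq_right hcd hk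
    exact ⟨k, by rw [hN']; ring⟩
  obtain ⟨χ₀, hχ₀⟩ := (χ.factorsThrough_conductor).2
  refine ⟨Nat.div_dvd_of_dvd hpdvd, DirichletCharacter.changeLevel hcp χ₀, ?_⟩
  rw [← DirichletCharacter.changeLevel_trans χ₀ hcp (Nat.div_dvd_of_dvd hpdvd)]
  exact hχ₀

end ImprimitiveAux

/-- Let `f : (ZMod N)ˣ → ℚ`. For each prime `p ∣ N`, let `τ p` be a generator of the
subgroup of `(ZMod N)ˣ` corresponding to `Gal(Q(ζ_N)/Q(ζ_{N/p}))`, i.e. the kernel of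
the reduction map `(ZMod N)ˣ → (ZMod (N/p))ˣ`.  Then `f` is imprimitive mod `N`
(its character decomposition involves no character of conductor `N`) if and only if
`∏_{p ∣ N} (1 - τ_p)` annihilates `P(f) = ∑_a f(a) σ_a` in the group ring
`ℚ[(ZMod N)ˣ] ≅ ℚ[Gal(Q(ζ_N)/Q)]`. -/
theorem imprimitive_iff_prod_one_sub_tau_annihilates {N : ℕ} [NeZero N] (hN : 1 < N)
    (f : (ZMod N)ˣ → ℚ) (τ : ℕ → (ZMod N)ˣ)
    (hτ : ∀ p (hp : p ∈ N.primeFactors),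
      Subgroup.zpowers (τ p) =
        (ZMod.unitsMap (Nat.div_dvd_of_dvd (Nat.dvd_of_mem_primeFactors hp))).ker) :
    (∀ χ : DirichletCharacter ℂ N, χ.conductor = N →
        ∑ a : (ZMod N)ˣ, (f a : ℂ) * χ a = 0) ↔
      (∏ p ∈ N.primeFactors,
          ((1 : MonoidAlgebra ℚ (ZMod N)ˣ) - MonoidAlgebra.single (τ p) 1)) *
        (∑ a : (ZMod N)ˣ, MonoidAlgebra.single a (f a)) = 0 := by
  have hev : ∀ χ : DirichletCharacter ℂ N,
      imprimEv χ ((∏ p ∈ N.primeFactors,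
          ((1 : MonoidAlgebra ℚ (ZMod N)ˣ) - MonoidAlgebra.single (τ p) 1)) *
        (∑ a : (ZMod N)ˣ, MonoidAlgebra.single a (f a)))
      = (∏ p ∈ N.primeFactors, (1 - χ ((τ p : ZMod N)))) *
        (∑ a : (ZMod N)ˣ, (f a : ℂ) * χ (a : ZMod N)) := by
    intro χ
    rw [map_mul, map_prod, map_sum]
    congr 1
    · refine Finset.prod_congr rfl fun p _ => ?_
      rw [map_sub, map_one, imprimEv_single, Rat.cast_one, one_mul]
    · exact Finset.sum_congr rfl fun a _ => imprimEv_single χ a (f a)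
  constructor
  · intro h
    apply imprim_eq_zero_of_forall_ev
    intro χ
    rw [hev χ]
    by_cases hχ : χ.conductor = N
    · rw [h χ hχ, mul_zero]
    · obtain ⟨p, hp, hFT⟩ := imprim_exists_factor χ hχ
      have hker := (DirichletCharacter.factorsThrough_iff_ker_unitsMap
        (Nat.div_dvd_of_dvd (Nat.dvd_of_mem_primeFactors hp))).mp hFT
      have hmem : τ p ∈ (ZMod.unitsMap
          (Nat.div_dvd_of_dvd (Nat.dvd_of_mem_primeFactors hp))).ker := by
        rw [← hτ p hp]; exact Subgroup.mem_zpowers _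
      have h1 : χ ((τ p : ZMod N)) = 1 := by
        have := hker hmem
        rw [MonoidHom.mem_ker] at this
        rw [← MulChar.coe_toUnitHom, this, Units.val_one]
      rw [Finset.prod_eq_zero hp (by rw [h1, sub_self]), zero_mul]
  · intro h χ hχ
    have h0 := congrArg (imprimEv χ) h
    rw [map_zero, hev χ] at h0
    have hprod : (∏ p ∈ N.primeFactors, (1 - χ ((τ p : ZMod N)))) ≠ 0 :=
      Finset.prod_ne_zero_iff.mpr fun p hp =>
        sub_ne_zero_of_ne (Ne.symm (imprim_chi_tau_ne_one hp (τ p) (hτ p hp) χ hχ))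
    exact (mul_eq_zero.mp h0).resolve_left hprod
end
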